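/- Let G be a connected simple graph on a finite nonempty vertex type V, let dist denote the graph distance in G, and let σ : V ≃ V be a permutation, interpreted as placing on each vertex v a token whose desired destination is σ v. Define the companion digraph F on V by: there is a directed edge from v to u iff v and u are adjacent in G and dist (σ v) u < dist (σ v) v. If σ is not the identity permutation, then at least one of the following holds: (a) F contains a directed cycle, i.e., there exist k ≥ 1 and vertices v₀, v₁, …, v_k with v_k = v₀ and a directed F-edge from v_i to v_{i+1} for every i < k; or (b) there exist vertices v and u with a directed F-edge from v to u such that σ u = u (an unhappy swap: the token on u is already at its destination while the token on v moves closer). -/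
import Mathlib


/-- If the token permutation is not the identity, the companion digraph `F` contains
either a directed cycle (a happy swap chain) or a directed edge into a vertex whose
token is already placed (an unhappy swap). -/
theorem companion_digraph_cycle_or_unhappy_swap {V : Type*} [Fintype V] [Nonempty V]
    (G : SimpleGraph V) (hG : G.Connected) (σ : Equiv.Perm V)
    (F : V → V → Prop)
    (hF : ∀ v u, F v u ↔ G.Adj v u ∧ G.dist (σ v) u < G.dist (σ v) v)
    (hσ : σ ≠ 1) :
    (∃ k : ℕ, 1 ≤ k ∧ ∃ vs : Fin (k + 1) → V, vs (Fin.last k) = vs 0 ∧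
        ∀ i : Fin k, F (vs i.castSucc) (vs i.succ)) ∨
      (∃ v u : V, F v u ∧ σ u = u) := by
  by_cases hb : ∃ v u : V, F v u ∧ σ u = u
  · exact Or.inr hb
  push_neg at hb
  left
  -- every misplaced vertex has an outgoing edge
  have hout : ∀ v : V, σ v ≠ v → ∃ u, F v u := by
    intro v hv
    obtain ⟨p, hp⟩ := hG.exists_walk_length_eq_dist (σ v) v
    have hd : 0 < G.dist (σ v) v := hG.pos_dist_of_ne hv
    have hr : 0 < p.reverse.length := by
      rwa [SimpleGraph.Walk.length_reverse, hp]
    obtain ⟨w, hadj, q, hq⟩ := p.reverse.exists_eq_cons_of_ne (Ne.symm hv)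
    refine ⟨w, (hF _ _).mpr ⟨hadj, ?_⟩⟩
    have h1 : G.dist (σ v) w ≤ q.reverse.length := SimpleGraph.dist_le _
    have h2 : q.length + 1 = G.dist (σ v) v := by
      have := congrArg SimpleGraph.Walk.length hq
      simpa [hp] using this.symm
    rw [SimpleGraph.Walk.length_reverse] at h1
    omega
  choose nxt hnxt using hout
  classical
  set f : V → V := fun v => if h : σ v ≠ v then nxt v h else v with hf
  obtain ⟨v0, hv0⟩ : ∃ v, σ v ≠ v := by
    by_contra h
    push_neg at h
    exact hσ (Equiv.ext fun v => h v)
  have key : ∀ v : V, σ v ≠ v → F v (f v) ∧ σ (f v) ≠ f v := by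
    intro v hv
    have : f v = nxt v hv := by simp [hf, hv]
    rw [this]
    exact ⟨hnxt v hv, hb v _ (hnxt v hv)⟩
  have hiter : ∀ n : ℕ, σ (f^[n] v0) ≠ f^[n] v0 := by
    intro n
    induction n with
    | zero => simpa using hv0
    | succ n ih =>
      rw [Function.iterate_succ_apply']
      exact (key _ ih).2
  have hstep : ∀ n : ℕ, F (f^[n] v0) (f^[n + 1] v0) := by
    intro n
    rw [Function.iterate_succ_apply']
    exact (key _ (hiter n)).1
  obtain ⟨m, n, hmn, heq⟩ := Finite.exists_ne_map_eq_of_infinite (fun n : ℕ => f^[n] v0)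
  wlog hlt : m < n generalizing m n
  · exact this n m hmn.symm heq.symm (by omega)
  refine ⟨n - m, by omega, fun i => f^[m + i] v0, ?_, ?_⟩
  · simp only [Fin.val_last, Fin.val_zero, Nat.add_zero]
    have : m + (n - m) = n := by omega
    rw [this]
    exact heq.symm
  · intro i
    have h1 : ((i.castSucc : Fin (n - m + 1)) : ℕ) = (i : ℕ) := rfl
    have h2 : ((i.succ : Fin (n - m + 1)) : ℕ) = (i : ℕ) + 1 := rfl
    simp only [h1, h2, ← Nat.add_assoc]
    exact hstep (m + i)
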